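/- Let A be a commutative bounded (resp. locally convex) algebra over 𝕂, and M, N bounded (resp. locally convex) A-modules. Then M ⊗_A^β N (resp. M ⊗_A^π N), with the A-module structure determined by a · (m ⊗ n) = (ma) ⊗ n, is a bounded (resp. locally convex) A-module; that is, module multiplication A × (M ⊗_A^β N) → M ⊗_A^β N is bounded (resp. A × (M ⊗_A^π N) → M ⊗_A^π N is continuous). -/

import Mathlib

/-!
STATEMENT 10: for a commutative bounded (resp. locally convex) algebra `A` and
bounded (resp. locally convex) `A`-modules `M`, `N`, the tensor product
`M ⊗_A^β N` (resp. `M ⊗_A^π N`) carries an `A`-module structure determined by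
`a · (m ⊗ n) = (a m) ⊗ n`, and module multiplication is bounded (resp. continuous).
-/

open MulOpposite Set
open scoped TensorProduct Pointwise

/-- Convexity expressed through the real scalars of `𝕜` (`𝕜` = ℝ or ℂ). -/
def RCConvex (𝕜 : Type*) [RCLike 𝕜] {E : Type*} [AddCommGroup E] [Module 𝕜 E]
    (s : Set E) : Prop :=
  ∀ ⦃x⦄, x ∈ s → ∀ ⦃y⦄, y ∈ s → ∀ t : ℝ, 0 ≤ t → t ≤ 1 →
    ((t : 𝕜) • x + (((1 - t : ℝ) : 𝕜)) • y) ∈ s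

/-- `τ` is a linear topology: addition and scalar multiplication continuous. -/
def IsLinearTop (𝕜 : Type*) [RCLike 𝕜] (E : Type*) [AddCommGroup E] [Module 𝕜 E]
    (τ : TopologicalSpace E) : Prop :=
  @IsTopologicalAddGroup E τ _ ∧ @ContinuousSMul 𝕜 E _ _ τ

/-- `τ` is a locally convex topology. -/
def IsLCTop (𝕜 : Type*) [RCLike 𝕜] (E : Type*) [AddCommGroup E] [Module 𝕜 E]
    (τ : TopologicalSpace E) : Prop :=
  IsLinearTop 𝕜 E τ ∧ ∀ U ∈ @nhds E τ 0, ∃ V ∈ @nhds E τ 0, V ⊆ U ∧ RCConvex 𝕜 V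

/-- von Neumann boundedness for an explicitly given topology. -/
def VNBdd (𝕜 : Type*) [RCLike 𝕜] {E : Type*} [AddCommGroup E] [Module 𝕜 E]
    (τ : TopologicalSpace E) (s : Set E) : Prop :=
  ∀ V ∈ @nhds E τ 0, Absorbs 𝕜 V s

/-- `f` maps von Neumann bounded sets to von Neumann bounded sets. -/
def BddMap (𝕜 : Type*) [RCLike 𝕜] {E F : Type*} [AddCommGroup E] [Module 𝕜 E]
    [AddCommGroup F] [Module 𝕜 F]
    (τE : TopologicalSpace E) (τF : TopologicalSpace F) (f : E → F) : Prop :=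
  ∀ s : Set E, VNBdd 𝕜 τE s → VNBdd 𝕜 τF (f '' s)

/-- A family `S` of maps is (equi-)bounded: this is exactly von Neumann boundedness
of `S` in the topology of uniform convergence on bounded sets. -/
def FamBdd (𝕜 : Type*) [RCLike 𝕜] {E F : Type*} [AddCommGroup E] [Module 𝕜 E]
    [AddCommGroup F] [Module 𝕜 F]
    (τE : TopologicalSpace E) (τF : TopologicalSpace F) (S : Set (E → F)) : Prop :=
  ∀ s : Set E, VNBdd 𝕜 τE s → VNBdd 𝕜 τF (⋃ f ∈ S, f '' s)

/-- `𝕜`-bilinearity of a map on a product. -/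
def IsBilinMap (𝕜 : Type*) [RCLike 𝕜] {M N E : Type*} [AddCommGroup M] [Module 𝕜 M]
    [AddCommGroup N] [Module 𝕜 N] [AddCommGroup E] [Module 𝕜 E]
    (f : M × N → E) : Prop :=
  (∀ m m' n, f (m + m', n) = f (m, n) + f (m', n)) ∧
  (∀ (c : 𝕜) m n, f (c • m, n) = c • f (m, n)) ∧
  (∀ m n n', f (m, n + n') = f (m, n) + f (m, n')) ∧
  (∀ (c : 𝕜) m n, f (m, c • n) = c • f (m, n))

/-- `f` is `A`-balanced: `f (m·a, n) = f (m, a·n)`; the right `A`-module structure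
on `M` is given by a `Aᵐᵒᵖ`-module structure. -/
def IsBalancedMap (A : Type*) [Ring A] {M N E : Type*} [AddCommGroup M]
    [Module Aᵐᵒᵖ M] [AddCommGroup N] [Module A N] (f : M × N → E) : Prop :=
  ∀ (a : A) (m : M) (n : N), f (op a • m, n) = f (m, a • n)

/-- `τ` is the projective tensor product topology on `M ⊗[𝕜] N`: the finest locally
convex topology making the canonical bilinear map continuous. -/
def IsProjTensorTop (𝕜 : Type*) [RCLike 𝕜] {M N : Type*} [AddCommGroup M] [Module 𝕜 M]
    [AddCommGroup N] [Module 𝕜 N] (τM : TopologicalSpace M) (τN : TopologicalSpace N)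
    (τ : TopologicalSpace (TensorProduct 𝕜 M N)) : Prop :=
  IsLCTop 𝕜 (TensorProduct 𝕜 M N) τ ∧
  @Continuous (M × N) (TensorProduct 𝕜 M N) (@instTopologicalSpaceProd M N τM τN) τ
    (fun p => p.1 ⊗ₜ[𝕜] p.2) ∧
  ∀ τ' : TopologicalSpace (TensorProduct 𝕜 M N), IsLCTop 𝕜 (TensorProduct 𝕜 M N) τ' →
    @Continuous (M × N) (TensorProduct 𝕜 M N) (@instTopologicalSpaceProd M N τM τN) τ'
      (fun p => p.1 ⊗ₜ[𝕜] p.2) → τ ≤ τ'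

/-- `τ` is the bornological tensor product topology on `M ⊗[𝕜] N`: the finest locally
convex topology making the canonical bilinear map bounded. -/
def IsBetaTensorTop (𝕜 : Type*) [RCLike 𝕜] {M N : Type*} [AddCommGroup M] [Module 𝕜 M]
    [AddCommGroup N] [Module 𝕜 N] (τM : TopologicalSpace M) (τN : TopologicalSpace N)
    (τ : TopologicalSpace (TensorProduct 𝕜 M N)) : Prop :=
  IsLCTop 𝕜 (TensorProduct 𝕜 M N) τ ∧
  BddMap 𝕜 (@instTopologicalSpaceProd M N τM τN) τ (fun p : M × N => p.1 ⊗ₜ[𝕜] p.2) ∧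
  ∀ τ' : TopologicalSpace (TensorProduct 𝕜 M N), IsLCTop 𝕜 (TensorProduct 𝕜 M N) τ' →
    BddMap 𝕜 (@instTopologicalSpaceProd M N τM τN) τ' (fun p : M × N => p.1 ⊗ₜ[𝕜] p.2) →
      τ ≤ τ'

/-- The subspace `J₀` of `M ⊗[𝕜] N` spanned by the elements `m·a ⊗ n - m ⊗ a·n`. -/
def balancedRel (𝕜 A : Type*) [RCLike 𝕜] [Ring A] [Algebra 𝕜 A] (M N : Type*)
    [AddCommGroup M] [Module 𝕜 M] [Module Aᵐᵒᵖ M]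
    [AddCommGroup N] [Module 𝕜 N] [Module A N] :
    Submodule 𝕜 (TensorProduct 𝕜 M N) :=
  Submodule.span 𝕜
    {x | ∃ (a : A) (m : M) (n : N), x = (op a • m) ⊗ₜ[𝕜] n - m ⊗ₜ[𝕜] (a • n)}

/-- The subspace `J₀` for modules over a commutative algebra `A`. -/
def balancedRelComm (𝕜 A : Type*) [RCLike 𝕜] [CommRing A] [Algebra 𝕜 A] (M N : Type*)
    [AddCommGroup M] [Module 𝕜 M] [Module A M]
    [AddCommGroup N] [Module 𝕜 N] [Module A N] :
    Submodule 𝕜 (TensorProduct 𝕜 M N) :=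
  Submodule.span 𝕜
    {x | ∃ (a : A) (m : M) (n : N), x = (a • m) ⊗ₜ[𝕜] n - m ⊗ₜ[𝕜] (a • n)}

section Toolkit
variable {𝕜 : Type*} [RCLike 𝕜] {E F : Type*} [AddCommGroup E] [Module 𝕜 E]
  [AddCommGroup F] [Module 𝕜 F]

theorem rcConvex_sInter {S : Set (Set E)} (h : ∀ s ∈ S, RCConvex 𝕜 s) : RCConvex 𝕜 (⋂₀ S) :=
  fun _ hx _ hy t h0 h1 s hs => h s hs (hx s hs) (hy s hs) t h0 h1

theorem rcConvex_iInter {ι : Sort*} {f : ι → Set E} (h : ∀ i, RCConvex 𝕜 (f i)) :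
    RCConvex 𝕜 (⋂ i, f i) := fun _ hx _ hy t h0 h1 => by
  rw [mem_iInter] at *
  exact fun i => h i (hx i) (hy i) t h0 h1

theorem rcConvex_inter {s t : Set E} (hs : RCConvex 𝕜 s) (ht : RCConvex 𝕜 t) :
    RCConvex 𝕜 (s ∩ t) :=
  fun _ hx _ hy r h0 h1 => ⟨hs hx.1 hy.1 r h0 h1, ht hx.2 hy.2 r h0 h1⟩

theorem rcConvex_univ : RCConvex 𝕜 (univ : Set E) := fun _ _ _ _ _ _ _ => mem_univ _

theorem RCConvex.preimage_linear {s : Set F} (hs : RCConvex 𝕜 s) (f : E →ₗ[𝕜] F) :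
    RCConvex 𝕜 (f ⁻¹' s) := by
  intro x hx y hy t h0 h1
  have : f ((t:𝕜) • x + (((1-t:ℝ)):𝕜) • y) = (t:𝕜) • f x + (((1-t:ℝ)):𝕜) • f y := by
    simp [map_add, map_smul]
  simpa [mem_preimage, this] using hs hx hy t h0 h1

theorem RCConvex.smul_set {s : Set E} (hs : RCConvex 𝕜 s) (c : 𝕜) : RCConvex 𝕜 (c • s) := by
  rintro x ⟨a, ha, rfl⟩ y ⟨b, hb, rfl⟩ t h0 h1
  refine ⟨(t:𝕜) • a + ((1-t:ℝ):𝕜) • b, hs ha hb t h0 h1, ?_⟩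
  show c • ((t:𝕜) • a + ((1-t:ℝ):𝕜) • b) = (t:𝕜) • c • a + ((1-t:ℝ):𝕜) • c • b
  rw [smul_add, smul_comm c, smul_comm c]

theorem Balanced.preimage_linear {s : Set F} (hs : Balanced 𝕜 s) (f : E →ₗ[𝕜] F) :
    Balanced 𝕜 (f ⁻¹' s) := by
  intro a ha
  rintro x ⟨y, hy, rfl⟩
  have : f (a • y) = a • f y := map_smul f a y
  exact mem_preimage.2 (by rw [this]; exact hs a ha ⟨f y, hy, rfl⟩)

theorem ofReal_half : (((2:ℝ)⁻¹ : ℝ) : 𝕜) = (2:𝕜)⁻¹ := by push_cast; ring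

theorem RCConvex.half_add {s : Set E} (hs : RCConvex 𝕜 s) {a b : E} (ha : a ∈ s) (hb : b ∈ s) :
    (2:𝕜)⁻¹ • a + (2:𝕜)⁻¹ • b ∈ s := by
  have h := hs ha hb (2⁻¹ : ℝ) (by norm_num) (by norm_num)
  have h2 : ((1 - (2⁻¹:ℝ) : ℝ) : 𝕜) = (2:𝕜)⁻¹ := by push_cast; ring
  rw [h2] at h
  rwa [ofReal_half] at h

theorem RCConvex.add_mem_of_half {s : Set E} (hbal : Balanced 𝕜 s) (hs : RCConvex 𝕜 s) {x y : E}
    (hx : x ∈ (2:𝕜)⁻¹ • s) (hy : y ∈ (2:𝕜)⁻¹ • s) : x + y ∈ s := by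
  obtain ⟨a, ha, rfl⟩ := hx
  obtain ⟨b, hb, rfl⟩ := hy
  exact hs.half_add ha hb

theorem RCConvex.add_subset_two_smul {s : Set E} (hbal : Balanced 𝕜 s) (hs : RCConvex 𝕜 s) :
    s + s ⊆ (2:𝕜) • s := by
  rintro _ ⟨x, hx, y, hy, rfl⟩
  refine ⟨(2:𝕜)⁻¹ • x + (2:𝕜)⁻¹ • y, hs.half_add hx hy, ?_⟩
  show (2:𝕜) • ((2:𝕜)⁻¹ • x + (2:𝕜)⁻¹ • y) = x + y
  rw [smul_add, smul_smul, smul_smul]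
  norm_num

-- absorbs helpers
theorem Absorbs.smul_set_left {B X : Set E} {c : 𝕜} (hc : c ≠ 0) (h : Absorbs 𝕜 B X) :
    Absorbs 𝕜 (c • B) X := by
  rcases absorbs_iff_norm.1 h with ⟨r, hr⟩
  refine absorbs_iff_norm.2 ⟨r / ‖c‖, fun d hd => ?_⟩
  have hc0 : (0:ℝ) < ‖c‖ := norm_pos_iff.2 hc
  have : r ≤ ‖d * c‖ := by rw [norm_mul]; rw [div_le_iff₀ hc0] at hd; linarith
  calc X ⊆ (d * c) • B := hr _ this
    _ = d • c • B := by rw [mul_smul]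

theorem absorbs_of_absorbs_smul {B X : Set E} {c : 𝕜} (hc : c ≠ 0)
    (h : Absorbs 𝕜 (c • B) X) : Absorbs 𝕜 B X := by
  have := h.smul_set_left (inv_ne_zero hc)
  rwa [smul_smul, inv_mul_cancel₀ hc, one_smul] at this

theorem Balanced.absorbs_singleton_of_mem {B : Set E} (hB : Balanced 𝕜 B) {x : E} {c : 𝕜}
    (hx : x ∈ c • B) : Absorbs 𝕜 B {x} := by
  rw [mem_smul_set] at hx
  obtain ⟨b, hb, hbe⟩ := hx
  rcases eq_or_ne c 0 with rfl | hc
  · rw [← hbe, zero_smul, singleton_zero]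
    exact Absorbs.zero (by simpa using hB.smul_mem (a := (0:𝕜)) (by simp) hb)
  · refine absorbs_iff_norm.2 ⟨‖c‖, fun d hd => ?_⟩
    have hd0 : d ≠ 0 := by
      intro h0; rw [h0, norm_zero] at hd
      exact hc (norm_le_zero_iff.1 hd)
    refine singleton_subset_iff.2 ⟨(d⁻¹ * c) • b, hB.smul_mem ?_ hb, ?_⟩
    · rw [norm_mul, norm_inv]
      have hdp : (0:ℝ) < ‖d‖ := norm_pos_iff.2 hd0
      rw [inv_mul_le_iff₀ hdp, mul_one]; exact hd
    · show d • ((d⁻¹ * c) • b) = x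
      rw [smul_smul, ← mul_assoc, mul_inv_cancel₀ hd0, one_mul, hbe]

theorem Balanced.absorbs_add_singleton {B : Set E} (hB : Balanced 𝕜 B) (hc : RCConvex 𝕜 B)
    {x y : E} (hx : Absorbs 𝕜 B {x}) (hy : Absorbs 𝕜 B {y}) : Absorbs 𝕜 B {x + y} := by
  have h2 : Absorbs 𝕜 (B + B) ({x} + {y}) := hx.add hy
  rw [singleton_add_singleton] at h2
  exact absorbs_of_absorbs_smul (two_ne_zero) (h2.mono_left (hc.add_subset_two_smul hB))

end Toolkit
section GoodFamily
variable {𝕜 : Type*} [RCLike 𝕜] {E F : Type*} [AddCommGroup E] [Module 𝕜 E]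
  [AddCommGroup F] [Module 𝕜 F]

structure GoodFamily (𝕜 : Type*) [RCLike 𝕜] {E : Type*} [AddCommGroup E] [Module 𝕜 E]
    (𝔅 : Set (Set E)) : Prop where
  nonempty : 𝔅.Nonempty
  inter : ∀ B₁ ∈ 𝔅, ∀ B₂ ∈ 𝔅, B₁ ∩ B₂ ∈ 𝔅
  balanced : ∀ B ∈ 𝔅, Balanced 𝕜 B
  convex : ∀ B ∈ 𝔅, RCConvex 𝕜 B
  absorbent : ∀ B ∈ 𝔅, Absorbent 𝕜 B
  smul_mem : ∀ (c : 𝕜), c ≠ 0 → ∀ B ∈ 𝔅, c • B ∈ 𝔅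

namespace GoodFamily

variable {𝔅 : Set (Set E)} (h : GoodFamily 𝕜 𝔅)
include h

theorem zero_mem {B : Set E} (hB : B ∈ 𝔅) : (0:E) ∈ B :=
  absorbs_zero_iff.1 (by rw [← singleton_zero]; exact h.absorbent B hB 0)

/-- The module filter basis associated to a good family. -/
def mfb : ModuleFilterBasis 𝕜 E where
  sets := 𝔅
  nonempty := h.nonempty
  inter_sets := fun hx hy => ⟨_, h.inter _ hx _ hy, subset_rfl⟩
  zero' := fun {U} hU => h.zero_mem hU
  add' := fun {U} hU => by
    refine ⟨(2:𝕜)⁻¹ • U, h.smul_mem _ (by norm_num) U hU, ?_⟩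
    rintro x ⟨a, ha, b, hb, rfl⟩
    exact (h.convex U hU).add_mem_of_half (h.balanced U hU) ha hb
  neg' := fun {U} hU => ⟨U, hU, fun x hx =>
    mem_preimage.2 (by simpa using h.balanced U hU (-1) (by simp) ⟨x, hx, rfl⟩)⟩
  conj' := fun x₀ {U} hU => ⟨U, hU, fun x hx => by simpa using hx⟩
  smul' := fun {U} hU => by
    refine ⟨Metric.closedBall 0 1, Metric.closedBall_mem_nhds 0 one_pos, U, hU, ?_⟩
    rintro x hx
    rw [mem_smul] at hx
    obtain ⟨c, hc, u, hu, rfl⟩ := hx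
    exact h.balanced U hU c (by simpa [mem_closedBall_zero_iff] using hc) ⟨u, hu, rfl⟩
  smul_left' := fun c {U} hU => by
    rcases eq_or_ne c 0 with rfl | hc
    · exact ⟨U, hU, fun x hx => mem_preimage.2 (by simpa using h.zero_mem hU)⟩
    · refine ⟨c⁻¹ • U, h.smul_mem _ (inv_ne_zero hc) U hU, ?_⟩
      rintro x ⟨u, hu, rfl⟩
      exact mem_preimage.2 (by rw [smul_smul, mul_inv_cancel₀ hc, one_smul]; exact hu)
  smul_right' := fun m₀ {U} hU => by
    obtain ⟨r, hr0, hr⟩ := (h.absorbent U hU m₀).exists_pos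
    rw [Metric.eventually_nhds_iff]
    refine ⟨r⁻¹, by positivity, fun {y} hy => ?_⟩
    rcases eq_or_ne y 0 with rfl | hy0
    · simpa using h.zero_mem hU
    · have h1 : r ≤ ‖y⁻¹‖ := by
        rw [norm_inv]
        rw [dist_zero_right] at hy
        rw [le_inv_comm₀ hr0 (norm_pos_iff.2 hy0)]
        exact hy.le
      have := hr y⁻¹ h1 (mem_singleton m₀)
      obtain ⟨u, hu, he⟩ := this
      have : y • m₀ = u := by
        rw [← he, smul_smul, mul_inv_cancel₀ hy0, one_smul]
      rwa [this]

/-- The topology generated by a good family. -/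
def topology : TopologicalSpace E := h.mfb.toAddGroupFilterBasis.topology

theorem mem_nhds {B : Set E} (hB : B ∈ 𝔅) : B ∈ @nhds E h.topology 0 :=
  h.mfb.toAddGroupFilterBasis.mem_nhds_zero hB

theorem exists_subset {U : Set E} (hU : U ∈ @nhds E h.topology 0) : ∃ B ∈ 𝔅, B ⊆ U := by
  have := (h.mfb.toAddGroupFilterBasis.nhds_zero_hasBasis).mem_iff.1 hU
  exact this

theorem isLC : IsLCTop 𝕜 E h.topology := by
  letI := h.mfb.toAddGroupFilterBasis.topology
  refine ⟨⟨h.mfb.toAddGroupFilterBasis.isTopologicalAddGroup, h.mfb.continuousSMul⟩, ?_⟩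
  intro U hU
  obtain ⟨B, hB, hBU⟩ := h.exists_subset hU
  exact ⟨B, h.mem_nhds hB, hBU, h.convex B hB⟩

end GoodFamily

/-- Balanced convex hull. -/
def cbHull (𝕜 : Type*) [RCLike 𝕜] {E : Type*} [AddCommGroup E] [Module 𝕜 E] (S : Set E) :
    Set E :=
  ⋂₀ {W : Set E | S ⊆ W ∧ Balanced 𝕜 W ∧ RCConvex 𝕜 W}

theorem subset_cbHull {S : Set E} : S ⊆ cbHull 𝕜 S :=
  fun x hx => fun W hW => hW.1 hx

theorem cbHull_min {S W : Set E} (h1 : S ⊆ W) (h2 : Balanced 𝕜 W) (h3 : RCConvex 𝕜 W) :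
    cbHull 𝕜 S ⊆ W := sInter_subset_of_mem ⟨h1, h2, h3⟩

theorem cbHull_balanced {S : Set E} : Balanced 𝕜 (cbHull 𝕜 S) :=
  Balanced.sInter fun _ hW => hW.2.1

theorem cbHull_convex {S : Set E} : RCConvex 𝕜 (cbHull 𝕜 S) :=
  rcConvex_sInter fun _ hW => hW.2.2

theorem image_cbHull_subset {S : Set E} (f : E →ₗ[𝕜] F) :
    f '' (cbHull 𝕜 S) ⊆ cbHull 𝕜 (f '' S) := by
  rw [image_subset_iff]
  exact cbHull_min
    (fun x hx => mem_preimage.2 (subset_cbHull (mem_image_of_mem f hx)))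
    (cbHull_balanced.preimage_linear f) (cbHull_convex.preimage_linear f)

end GoodFamily

theorem cbHull_mono {𝕜 : Type*} [RCLike 𝕜] {E : Type*} [AddCommGroup E] [Module 𝕜 E]
    {S S' : Set E} (h : S ⊆ S') : cbHull 𝕜 S ⊆ cbHull 𝕜 S' :=
  cbHull_min (h.trans subset_cbHull) cbHull_balanced cbHull_convex
open Filter Topology
section VNB
variable {𝕜 : Type*} [RCLike 𝕜] {E F : Type*} [AddCommGroup E] [Module 𝕜 E]
  [AddCommGroup F] [Module 𝕜 F]

theorem VNBdd.mono_set {τ : TopologicalSpace E} {s t : Set E} (h : VNBdd 𝕜 τ s) (hts : t ⊆ s) :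
    VNBdd 𝕜 τ t := fun V hV => (h V hV).mono_right hts

theorem vnbdd_fst {τE : TopologicalSpace E} {τF : TopologicalSpace F} {s : Set (E × F)}
    (h : VNBdd 𝕜 (@instTopologicalSpaceProd E F τE τF) s) : VNBdd 𝕜 τE (Prod.fst '' s) := by
  intro V hV
  letI := τE; letI := τF
  have hV' : (V ×ˢ (univ : Set F)) ∈ 𝓝 (0 : E × F) := prod_mem_nhds hV univ_mem
  obtain ⟨r, hr⟩ := absorbs_iff_norm.1 (h _ hV')
  refine absorbs_iff_norm.2 ⟨r, fun c hc => ?_⟩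
  rintro _ ⟨⟨x, y⟩, hxy, rfl⟩
  obtain ⟨⟨vx, vy⟩, ⟨hvx, -⟩, he⟩ := hr c hc hxy
  exact ⟨vx, hvx, congrArg Prod.fst he⟩

theorem vnbdd_snd {τE : TopologicalSpace E} {τF : TopologicalSpace F} {s : Set (E × F)}
    (h : VNBdd 𝕜 (@instTopologicalSpaceProd E F τE τF) s) : VNBdd 𝕜 τF (Prod.snd '' s) := by
  intro V hV
  letI := τE; letI := τF
  have hV' : ((univ : Set E) ×ˢ V) ∈ 𝓝 (0 : E × F) := prod_mem_nhds univ_mem hV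
  obtain ⟨r, hr⟩ := absorbs_iff_norm.1 (h _ hV')
  refine absorbs_iff_norm.2 ⟨r, fun c hc => ?_⟩
  rintro _ ⟨⟨x, y⟩, hxy, rfl⟩
  obtain ⟨⟨vx, vy⟩, ⟨-, hvy⟩, he⟩ := hr c hc hxy
  exact ⟨vy, hvy, congrArg Prod.snd he⟩

theorem vnbdd_prod {τE : TopologicalSpace E} {τF : TopologicalSpace F} {s : Set E} {t : Set F}
    (hs : VNBdd 𝕜 τE s) (ht : VNBdd 𝕜 τF t) :
    VNBdd 𝕜 (@instTopologicalSpaceProd E F τE τF) (s ×ˢ t) := by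
  intro V hV
  letI := τE; letI := τF
  have hV' : V ∈ 𝓝 ((0 : E), (0 : F)) := hV
  rw [mem_nhds_prod_iff] at hV'
  obtain ⟨u, hu, v, hv, huv⟩ := hV'
  obtain ⟨r1, h1⟩ := absorbs_iff_norm.1 (hs u hu)
  obtain ⟨r2, h2⟩ := absorbs_iff_norm.1 (ht v hv)
  refine absorbs_iff_norm.2 ⟨max r1 r2, fun c hc => ?_⟩
  rintro ⟨x, y⟩ ⟨hx, hy⟩
  obtain ⟨ux, hux, hex⟩ := h1 c (le_trans (le_max_left _ _) hc) hx
  obtain ⟨vy, hvy, hey⟩ := h2 c (le_trans (le_max_right _ _) hc) hy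
  exact ⟨(ux, vy), huv ⟨hux, hvy⟩, Prod.ext hex hey⟩

theorem vnbdd_singleton {τ : TopologicalSpace E} (hlt : IsLinearTop 𝕜 E τ) (x : E) :
    VNBdd 𝕜 τ {x} := by
  intro V hV
  letI := τ
  haveI := hlt.2
  exact absorbent_nhds_zero hV x

theorem exists_balanced_convex_nhds {τ : TopologicalSpace E} (h : IsLCTop 𝕜 E τ) {W : Set E}
    (hW : W ∈ @nhds E τ 0) :
    ∃ B ∈ @nhds E τ 0, B ⊆ W ∧ Balanced 𝕜 B ∧ RCConvex 𝕜 B := by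
  letI := τ
  haveI := h.1.1
  haveI := h.1.2
  obtain ⟨V, hV, hVW, hVc⟩ := h.2 W hW
  refine ⟨balancedCore 𝕜 V, balancedCore_mem_nhds_zero hV,
    (balancedCore_subset V).trans hVW, balancedCore_balanced V, ?_⟩
  rw [balancedCore_eq_iInter (mem_of_mem_nhds hV)]
  exact rcConvex_iInter fun r => rcConvex_iInter fun _ => hVc.smul_set r

theorem isLCTop_induced (f : E →ₗ[𝕜] F) {τF : TopologicalSpace F} (h : IsLCTop 𝕜 F τF) :
    IsLCTop 𝕜 E (τF.induced f) := by
  letI := τF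
  haveI := h.1.1
  haveI := h.1.2
  letI τE : TopologicalSpace E := TopologicalSpace.induced f inferInstance
  refine ⟨⟨?_, ?_⟩, ?_⟩
  · exact topologicalAddGroup_induced (f.toAddMonoidHom)
  · exact IsInducing.continuousSMul ⟨rfl⟩ continuous_id fun {c x} => map_smul f c x
  · intro U hU
    rw [nhds_induced, map_zero] at hU ⊢
    obtain ⟨W, hW, hWU⟩ := hU
    obtain ⟨V, hV, hVW, hVc⟩ := h.2 W hW
    exact ⟨f ⁻¹' V, Filter.preimage_mem_comap hV,
      (preimage_mono hVW).trans hWU, hVc.preimage_linear f⟩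

end VNB
section Tensor
set_option linter.unusedSectionVars false
open Filter Topology

variable {𝕜 : Type*} [RCLike 𝕜]
  {A : Type*} [CommRing A] [Algebra 𝕜 A] [TopologicalSpace A]
  {M : Type*} [AddCommGroup M] [Module 𝕜 M] [Module A M] [IsScalarTower 𝕜 A M]
    [TopologicalSpace M]
  {N : Type*} [AddCommGroup N] [Module 𝕜 N] [Module A N] [IsScalarTower 𝕜 A N]
    [TopologicalSpace N]

/-- Multiplication by `a : A` as a `𝕜`-linear map. -/
def lmulK (𝕜 : Type*) [RCLike 𝕜] {A M : Type*} [CommRing A] [Algebra 𝕜 A] [AddCommGroup M]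
    [Module 𝕜 M] [Module A M] [IsScalarTower 𝕜 A M] (a : A) : M →ₗ[𝕜] M where
  toFun m := a • m
  map_add' := smul_add a
  map_smul' c m := by
    show a • (c • m) = (RingHom.id 𝕜) c • (a • m)
    rw [RingHom.id_apply, ← algebraMap_smul A c m, ← mul_smul, mul_comm, mul_smul,
      algebraMap_smul]

/-- The action of `a : A` on `M ⊗[𝕜] N` through the first factor. -/
noncomputable def TaL (𝕜 : Type*) [RCLike 𝕜] {A : Type*} [CommRing A] [Algebra 𝕜 A]
    (M N : Type*) [AddCommGroup M] [Module 𝕜 M] [Module A M] [IsScalarTower 𝕜 A M]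
    [AddCommGroup N] [Module 𝕜 N] (a : A) :
    TensorProduct 𝕜 M N →ₗ[𝕜] TensorProduct 𝕜 M N :=
  (lmulK 𝕜 a).rTensor N

theorem TaL_tmul (a : A) (m : M) (n : N) : TaL 𝕜 M N a (m ⊗ₜ[𝕜] n) = (a • m) ⊗ₜ[𝕜] n :=
  LinearMap.rTensor_tmul _ _ _ _

theorem TaL_comp (a b : A) (x : TensorProduct 𝕜 M N) :
    TaL 𝕜 M N a (TaL 𝕜 M N b x) = TaL 𝕜 M N (a * b) x := by
  have : (lmulK 𝕜 (M := M) a) ∘ₗ (lmulK 𝕜 b) = lmulK 𝕜 (a * b) := by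
    ext m; simp [lmulK, mul_smul]
  rw [TaL, TaL, TaL, ← this, LinearMap.rTensor_comp, LinearMap.comp_apply]

theorem TaL_one (x : TensorProduct 𝕜 M N) : TaL 𝕜 M N (1 : A) x = x := by
  have : (lmulK 𝕜 (M := M) (1:A)) = LinearMap.id := by ext m; simp [lmulK]
  rw [TaL, this, LinearMap.rTensor_id, LinearMap.id_apply]

theorem TaL_add (a b : A) (x : TensorProduct 𝕜 M N) :
    TaL 𝕜 M N (a + b) x = TaL 𝕜 M N a x + TaL 𝕜 M N b x := by
  have : (lmulK 𝕜 (M := M) (a + b)) = lmulK 𝕜 a + lmulK 𝕜 b := by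
    ext m; simp [lmulK, add_smul]
  rw [TaL, this, LinearMap.rTensor_add, LinearMap.add_apply]; rfl

/-- The set of elementary tensors from `U` and `V`. -/
def tset (𝕜 : Type*) [RCLike 𝕜] {M N : Type*} [AddCommGroup M] [Module 𝕜 M]
    [AddCommGroup N] [Module 𝕜 N] (U : Set M) (V : Set N) : Set (TensorProduct 𝕜 M N) :=
  image2 (fun m n => m ⊗ₜ[𝕜] n) U V

theorem smul_tset (c : 𝕜) (U : Set M) (V : Set N) :
    c • tset 𝕜 U V = tset 𝕜 (c • U) V := by
  ext x
  constructor
  · rintro ⟨_, ⟨m, hm, n, hn, rfl⟩, rfl⟩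
    exact ⟨c • m, smul_mem_smul_set hm, n, hn, (TensorProduct.smul_tmul' c m n).symm⟩
  · rintro ⟨_, ⟨m, hm, rfl⟩, n, hn, rfl⟩
    exact ⟨m ⊗ₜ[𝕜] n, ⟨m, hm, n, hn, rfl⟩, (TensorProduct.smul_tmul' c m n)⟩

theorem exists_smul_mem_of_absorbs {E : Type*} [AddCommGroup E] [Module 𝕜 E] {s : Set E} {x : E}
    (h : Absorbs 𝕜 s {x}) : ∃ c : 𝕜, c ≠ 0 ∧ x ∈ c • s := by
  obtain ⟨r, hr0, hr⟩ := h.exists_pos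
  refine ⟨((max r 1 : ℝ) : 𝕜), ?_, ?_⟩
  · simp only [ne_eq, RCLike.ofReal_eq_zero]
    positivity
  · have hn : r ≤ ‖((max r 1 : ℝ) : 𝕜)‖ := by
      rw [RCLike.norm_ofReal, abs_of_pos (by positivity)]
      exact le_max_left _ _
    exact hr _ hn rfl

/-- The π-family: candidate neighborhoods of zero for the projective topology. -/
def piFam (𝕜 : Type*) [RCLike 𝕜] (M N : Type*) [AddCommGroup M] [Module 𝕜 M]
    [AddCommGroup N] [Module 𝕜 N] [TopologicalSpace M] [TopologicalSpace N] :
    Set (Set (TensorProduct 𝕜 M N)) :=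
  {B | Balanced 𝕜 B ∧ RCConvex 𝕜 B ∧ Absorbent 𝕜 B ∧
    ∃ U ∈ 𝓝 (0:M), ∃ V ∈ 𝓝 (0:N), tset 𝕜 U V ⊆ B}

theorem piFam_good (hM : IsLCTop 𝕜 M inferInstance) (hN : IsLCTop 𝕜 N inferInstance) :
    GoodFamily 𝕜 (piFam 𝕜 M N) := by
  haveI : ContinuousSMul 𝕜 M := hM.1.2
  constructor
  · exact ⟨univ, balanced_univ, rcConvex_univ, fun x => Absorbs.univ,
      univ, univ_mem, univ, univ_mem, subset_univ _⟩
  · rintro B₁ ⟨hb1, hc1, ha1, U₁, hU₁, V₁, hV₁, hs1⟩ B₂ ⟨hb2, hc2, ha2, U₂, hU₂, V₂, hV₂, hs2⟩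
    refine ⟨hb1.inter hb2, rcConvex_inter hc1 hc2, fun x => (ha1 x).inter (ha2 x),
      U₁ ∩ U₂, inter_mem hU₁ hU₂, V₁ ∩ V₂, inter_mem hV₁ hV₂, ?_⟩
    rintro _ ⟨m, hm, n, hn, rfl⟩
    exact ⟨hs1 ⟨m, hm.1, n, hn.1, rfl⟩, hs2 ⟨m, hm.2, n, hn.2, rfl⟩⟩
  · exact fun B hB => hB.1
  · exact fun B hB => hB.2.1
  · exact fun B hB => hB.2.2.1
  · rintro c hc B ⟨hb, hcv, ha, U, hU, V, hV, hs⟩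
    refine ⟨hb.smul c, hcv.smul_set c, fun x => (ha x).smul_set_left hc,
      c • U, (set_smul_mem_nhds_zero_iff hc).2 hU, V, hV, ?_⟩
    rw [← smul_tset]
    exact smul_set_mono hs

theorem cbHull_tset_mem_piFam (hM : IsLCTop 𝕜 M inferInstance) (hN : IsLCTop 𝕜 N inferInstance)
    {U : Set M} {V : Set N} (hU : U ∈ 𝓝 (0:M)) (hV : V ∈ 𝓝 (0:N)) :
    cbHull 𝕜 (tset 𝕜 U V) ∈ piFam 𝕜 M N := by
  haveI : ContinuousSMul 𝕜 M := hM.1.2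
  haveI : ContinuousSMul 𝕜 N := hN.1.2
  refine ⟨cbHull_balanced, cbHull_convex, ?_, U, hU, V, hV, subset_cbHull⟩
  intro x
  induction x using TensorProduct.induction_on with
  | zero =>
    rw [singleton_zero]
    exact Absorbs.zero (subset_cbHull ⟨0, mem_of_mem_nhds hU, 0, mem_of_mem_nhds hV, by simp⟩)
  | tmul m n =>
    obtain ⟨c, hc0, hm⟩ := exists_smul_mem_of_absorbs (absorbent_nhds_zero (𝕜 := 𝕜) hU m)
    obtain ⟨u, hu, hcu⟩ := hm
    obtain ⟨d, hd0, hn⟩ := exists_smul_mem_of_absorbs (absorbent_nhds_zero (𝕜 := 𝕜) hV n)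
    obtain ⟨v, hv, hdv⟩ := hn
    refine cbHull_balanced.absorbs_singleton_of_mem (c := c * d) ?_
    refine ⟨u ⊗ₜ[𝕜] v, subset_cbHull ⟨u, hu, v, hv, rfl⟩, ?_⟩
    subst hcu
    subst hdv
    show (c * d) • (u ⊗ₜ[𝕜] v) = (c • u) ⊗ₜ[𝕜] (d • v)
    rw [mul_smul, ← TensorProduct.tmul_smul, TensorProduct.smul_tmul']
  | add x y hx hy => exact cbHull_balanced.absorbs_add_singleton cbHull_convex hx hy

/-- The β-family: candidate neighborhoods of zero for the bornological topology. -/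
def betaFam (𝕜 : Type*) [RCLike 𝕜] (M N : Type*) [AddCommGroup M] [Module 𝕜 M]
    [AddCommGroup N] [Module 𝕜 N] [TopologicalSpace M] [TopologicalSpace N] :
    Set (Set (TensorProduct 𝕜 M N)) :=
  {B | Balanced 𝕜 B ∧ RCConvex 𝕜 B ∧ Absorbent 𝕜 B ∧
    ∀ s : Set (M × N), VNBdd 𝕜 inferInstance s →
      Absorbs 𝕜 B ((fun p : M × N => p.1 ⊗ₜ[𝕜] p.2) '' s)}

theorem betaFam_good : GoodFamily 𝕜 (betaFam 𝕜 M N) := by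
  constructor
  · exact ⟨univ, balanced_univ, rcConvex_univ, fun x => Absorbs.univ, fun s _ => Absorbs.univ⟩
  · rintro B₁ ⟨hb1, hc1, ha1, h1⟩ B₂ ⟨hb2, hc2, ha2, h2⟩
    exact ⟨hb1.inter hb2, rcConvex_inter hc1 hc2, fun x => (ha1 x).inter (ha2 x),
      fun s hs => (h1 s hs).inter (h2 s hs)⟩
  · exact fun B hB => hB.1
  · exact fun B hB => hB.2.1
  · exact fun B hB => hB.2.2.1
  · rintro c hc B ⟨hb, hcv, ha, h4⟩
    exact ⟨hb.smul c, hcv.smul_set c, fun x => (ha x).smul_set_left hc,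
      fun s hs => (h4 s hs).smul_set_left hc⟩

theorem betaFam_tmul_bdd :
    BddMap 𝕜 (inferInstance : TopologicalSpace (M × N)) (betaFam_good (𝕜 := 𝕜) (M := M) (N := N)).topology
      (fun p : M × N => p.1 ⊗ₜ[𝕜] p.2) := by
  intro s hs V hV
  obtain ⟨B, hB, hBV⟩ := GoodFamily.exists_subset _ hV
  exact (hB.2.2.2 s hs).mono_left hBV

end Tensor
section Decomp
open Filter Topology
set_option linter.unusedSectionVars false

variable {𝕜 : Type*} [RCLike 𝕜] {E F : Type*} [AddCommGroup E] [Module 𝕜 E]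
  [AddCommGroup F] [Module 𝕜 F]

theorem RCConvex.quarter_three {B : Set E} (hbal : Balanced 𝕜 B) (hconv : RCConvex 𝕜 B)
    {x y z : E} (hx : x ∈ (4:𝕜)⁻¹ • B) (hy : y ∈ (4:𝕜)⁻¹ • B) (hz : z ∈ (4:𝕜)⁻¹ • B) :
    x + y + z ∈ B := by
  set B2 := (2:𝕜)⁻¹ • B with hB2
  have h42 : (4:𝕜)⁻¹ • B = (2:𝕜)⁻¹ • B2 := by
    rw [hB2, smul_smul]; norm_num
  have hb2 : Balanced 𝕜 B2 := hbal.smul _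
  have hc2 : RCConvex 𝕜 B2 := hconv.smul_set _
  have hxy : x + y ∈ B2 := hc2.add_mem_of_half hb2 (h42 ▸ hx) (h42 ▸ hy)
  have hz2 : z ∈ B2 := by
    rw [h42] at hz
    exact hb2 _ (by rw [norm_inv]; simp; norm_num) hz
  exact hconv.add_mem_of_half hbal hxy hz2

theorem absorbs_omega {A : Type*} {g : A → E →ₗ[𝕜] F} {S : Set A} {W' : Set F} {X : Set E}
    (h : Absorbs 𝕜 W' {y | ∃ a ∈ S, ∃ x ∈ X, g a x = y}) :
    Absorbs 𝕜 {t | ∀ a ∈ S, g a t ∈ W'} X := by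
  obtain ⟨r, hr⟩ := absorbs_iff_norm.1 h
  refine absorbs_iff_norm.2 ⟨max r 1, fun c hc => fun x hx => ?_⟩
  have hc0 : c ≠ 0 := by
    intro h0
    rw [h0, norm_zero] at hc
    have := le_trans (le_max_right r 1) hc
    linarith
  refine ⟨c⁻¹ • x, fun a ha => ?_, ?_⟩
  swap
  · show c • (c⁻¹ • x) = x
    rw [smul_smul, mul_inv_cancel₀ hc0, one_smul]
  have hmem : g a x ∈ c • W' :=
    hr c (le_trans (le_max_left _ _) hc) ⟨a, ha, x, hx, rfl⟩
  obtain ⟨w, hw, hwe⟩ := hmem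
  have : g a (c⁻¹ • x) = w := by
    rw [map_smul, ← hwe, smul_smul, inv_mul_cancel₀ hc0, one_smul]
  rw [this]; exact hw

end Decomp

section QuotHelp
open Filter Topology

variable {𝕜 : Type*} [RCLike 𝕜] {E : Type*} [AddCommGroup E] [Module 𝕜 E]

theorem mkQ_isOpenMap (J : Submodule 𝕜 E) (τ : TopologicalSpace E)
    (hg : @IsTopologicalAddGroup E τ _) :
    @IsOpenMap E (E ⧸ J) τ (τ.coinduced J.mkQ) J.mkQ := by
  letI := τ
  intro O hO
  rw [isOpen_coinduced]
  have hset : J.mkQ ⁻¹' (J.mkQ '' O) = ⋃ j ∈ (J : Set E), (fun x => x + j) '' O := by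
    ext x
    simp only [mem_preimage, mem_image, mem_iUnion]
    constructor
    · rintro ⟨o, hoO, he⟩
      have hxo : x - o ∈ J := by
        rw [← Submodule.Quotient.eq J]
        exact (by simpa [Submodule.mkQ_apply] using he.symm)
      exact ⟨x - o, hxo, o, hoO, by abel⟩
    · rintro ⟨j, hj, o, hoO, rfl⟩
      refine ⟨o, hoO, ?_⟩
      simp only [Submodule.mkQ_apply]
      rw [eq_comm, Submodule.Quotient.eq J]
      simpa using hj
  rw [hset]
  exact isOpen_biUnion fun j _ => (Homeomorph.addRight j).isOpenMap O hO

theorem mkQ_image_nhds (J : Submodule 𝕜 E) (τ : TopologicalSpace E)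
    (hg : @IsTopologicalAddGroup E τ _) {U : Set E} (hU : U ∈ @nhds E τ 0) :
    J.mkQ '' U ∈ @nhds (E ⧸ J) (τ.coinduced J.mkQ) 0 := by
  letI := τ
  letI : TopologicalSpace (E ⧸ J) := τ.coinduced J.mkQ
  have := (mkQ_isOpenMap J τ hg).image_mem_nhds (x := 0) hU
  simpa using this

theorem mkQ_preimage_nhds (J : Submodule 𝕜 E) (τ : TopologicalSpace E)
    {U : Set (E ⧸ J)} (hU : U ∈ @nhds (E ⧸ J) (τ.coinduced J.mkQ) 0) :
    J.mkQ ⁻¹' U ∈ @nhds E τ 0 := by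
  letI := τ
  letI : TopologicalSpace (E ⧸ J) := τ.coinduced J.mkQ
  have hc : Continuous J.mkQ := continuous_coinduced_rng
  exact hc.continuousAt.preimage_mem_nhds (by simpa using hU)

end QuotHelp
section BigLemmas
open Filter Topology
set_option linter.unusedSectionVars false

variable {𝕜 : Type*} [RCLike 𝕜]
  {A : Type*} [CommRing A] [Algebra 𝕜 A] [TopologicalSpace A]
  {M : Type*} [AddCommGroup M] [Module 𝕜 M] [Module A M] [IsScalarTower 𝕜 A M]
    [TopologicalSpace M]
  {N : Type*} [AddCommGroup N] [Module 𝕜 N] [Module A N] [IsScalarTower 𝕜 A N]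
    [TopologicalSpace N]

/-- Continuity of the canonical bilinear map into the π-family topology. -/
theorem piFam_tmul_cont (hM : IsLCTop 𝕜 M inferInstance) (hN : IsLCTop 𝕜 N inferInstance) :
    @Continuous (M × N) _ _ (piFam_good hM hN).topology (fun p : M × N => p.1 ⊗ₜ[𝕜] p.2) := by
  haveI : ContinuousSMul 𝕜 M := hM.1.2
  haveI : ContinuousSMul 𝕜 N := hN.1.2
  haveI : IsTopologicalAddGroup M := hM.1.1
  haveI : IsTopologicalAddGroup N := hN.1.1
  letI τpi := (piFam_good hM hN).topology
  rw [continuous_iff_continuousAt]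
  rintro ⟨m₀, n₀⟩
  have hbasis := (piFam_good hM hN).mfb.toAddGroupFilterBasis.nhds_hasBasis (m₀ ⊗ₜ[𝕜] n₀)
  unfold ContinuousAt
  refine hbasis.tendsto_right_iff.2 ?_
  rintro B ⟨hbal, hconv, habs, U, hU, V, hV, hUV⟩
  set U₁ := (4:𝕜)⁻¹ • U with hU₁def
  have hU₁ : U₁ ∈ 𝓝 (0:M) := (set_smul_mem_nhds_zero_iff (by norm_num)).2 hU
  have hUV' : tset 𝕜 U₁ V ⊆ (4:𝕜)⁻¹ • B := by
    rw [hU₁def, ← smul_tset]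
    exact smul_set_mono hUV
  obtain ⟨c, hc0, hcm⟩ := exists_smul_mem_of_absorbs (absorbent_nhds_zero (𝕜 := 𝕜) hU₁ m₀)
  obtain ⟨d, hd0, hdn⟩ := exists_smul_mem_of_absorbs (absorbent_nhds_zero (𝕜 := 𝕜) hV n₀)
  have hUm : U₁ ∩ d⁻¹ • U₁ ∈ 𝓝 (0:M) :=
    inter_mem hU₁ ((set_smul_mem_nhds_zero_iff (inv_ne_zero hd0)).2 hU₁)
  have hVn : V ∩ c⁻¹ • V ∈ 𝓝 (0:N) :=
    inter_mem hV ((set_smul_mem_nhds_zero_iff (inv_ne_zero hc0)).2 hV)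
  have e1 : ∀ᶠ p : M × N in 𝓝 (m₀, n₀), p.1 - m₀ ∈ U₁ ∩ d⁻¹ • U₁ := by
    have ht : Tendsto (fun p : M × N => p.1 - m₀) (𝓝 (m₀, n₀)) (𝓝 0) := by
      have := (continuous_fst.sub (continuous_const (y := m₀))).tendsto (m₀, n₀)
      exact this.trans (le_of_eq (by simp))
    exact ht.eventually_mem hUm
  have e2 : ∀ᶠ p : M × N in 𝓝 (m₀, n₀), p.2 - n₀ ∈ V ∩ c⁻¹ • V := by
    have ht : Tendsto (fun p : M × N => p.2 - n₀) (𝓝 (m₀, n₀)) (𝓝 0) := by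
      have := (continuous_snd.sub (continuous_const (y := n₀))).tendsto (m₀, n₀)
      exact this.trans (le_of_eq (by simp))
    exact ht.eventually_mem hVn
  filter_upwards [e1, e2] with p h1 h2
  refine ⟨p.1 ⊗ₜ[𝕜] p.2 - m₀ ⊗ₜ[𝕜] n₀, ?_, ?eq⟩
  case eq =>
    show m₀ ⊗ₜ[𝕜] n₀ + (p.1 ⊗ₜ[𝕜] p.2 - m₀ ⊗ₜ[𝕜] n₀) = p.1 ⊗ₜ[𝕜] p.2
    abel
  have key : p.1 ⊗ₜ[𝕜] p.2 - m₀ ⊗ₜ[𝕜] n₀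
      = (p.1 - m₀) ⊗ₜ[𝕜] (p.2 - n₀) + m₀ ⊗ₜ[𝕜] (p.2 - n₀) + (p.1 - m₀) ⊗ₜ[𝕜] n₀ := by
    simp only [TensorProduct.sub_tmul, TensorProduct.tmul_sub]
    abel
  rw [key]
  have hp1 : (p.1 - m₀) ⊗ₜ[𝕜] (p.2 - n₀) ∈ (4:𝕜)⁻¹ • B :=
    hUV' ⟨_, h1.1, _, h2.1, rfl⟩
  have hp2 : m₀ ⊗ₜ[𝕜] (p.2 - n₀) ∈ (4:𝕜)⁻¹ • B := by
    obtain ⟨u, hu, hcu⟩ := hcm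
    obtain ⟨v, hv, hcv⟩ := h2.2
    have : m₀ ⊗ₜ[𝕜] (p.2 - n₀) = u ⊗ₜ[𝕜] v := by
      rw [← hcu, ← hcv]
      show (c • u) ⊗ₜ[𝕜] (c⁻¹ • v) = u ⊗ₜ[𝕜] v
      rw [TensorProduct.tmul_smul, ← TensorProduct.smul_tmul', smul_smul,
        inv_mul_cancel₀ hc0, one_smul]
    rw [this]
    exact hUV' ⟨u, hu, v, hv, rfl⟩
  have hp3 : (p.1 - m₀) ⊗ₜ[𝕜] n₀ ∈ (4:𝕜)⁻¹ • B := by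
    obtain ⟨v, hv, hdv⟩ := hdn
    obtain ⟨u, hu, hdu⟩ := h1.2
    have : (p.1 - m₀) ⊗ₜ[𝕜] n₀ = u ⊗ₜ[𝕜] v := by
      rw [← hdu, ← hdv]
      show (d⁻¹ • u) ⊗ₜ[𝕜] (d • v) = u ⊗ₜ[𝕜] v
      rw [TensorProduct.tmul_smul, ← TensorProduct.smul_tmul', smul_smul,
        mul_inv_cancel₀ hd0, one_smul]
    rw [this]
    exact hUV' ⟨u, hu, v, hv, rfl⟩
  exact hconv.quarter_three hbal hp1 hp2 hp3

/-- For the projective topology, `TaL a` is continuous. -/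
theorem cont_TaL_pi {τT : TopologicalSpace (TensorProduct 𝕜 M N)}
    (hT : IsProjTensorTop 𝕜 inferInstance inferInstance τT)
    (hσM : Continuous fun p : A × M => p.1 • p.2) (a : A) :
    @Continuous _ _ τT τT (TaL 𝕜 M N a) := by
  rw [@continuous_iff_le_induced _ _ _ τT τT]
  refine hT.2.2 (τT.induced (TaL 𝕜 M N a)) (isLCTop_induced _ hT.1) ?_
  rw [@continuous_induced_rng _ _ _ _ _ τT]
  have : (TaL 𝕜 M N a) ∘ (fun p : M × N => p.1 ⊗ₜ[𝕜] p.2)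
      = (fun p : M × N => p.1 ⊗ₜ[𝕜] p.2) ∘ (fun p : M × N => (a • p.1, p.2)) := by
    funext p
    exact TaL_tmul a p.1 p.2
  rw [this]
  exact hT.2.1.comp
    ((hσM.comp (continuous_const.prodMk continuous_fst)).prodMk continuous_snd)

/-- For the bornological topology, `TaL a` is continuous. -/
theorem cont_TaL_beta (hA : IsLCTop 𝕜 A inferInstance)
    {τT : TopologicalSpace (TensorProduct 𝕜 M N)}
    (hT : IsBetaTensorTop 𝕜 inferInstance inferInstance τT)
    (hσM : BddMap 𝕜 (inferInstance : TopologicalSpace (A × M)) inferInstance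
      (fun p : A × M => p.1 • p.2)) (a : A) :
    @Continuous _ _ τT τT (TaL 𝕜 M N a) := by
  rw [@continuous_iff_le_induced _ _ _ τT τT]
  refine hT.2.2 (τT.induced (TaL 𝕜 M N a)) (isLCTop_induced _ hT.1) ?_
  intro s hs W hW
  rw [nhds_induced] at hW
  have h0 : TaL 𝕜 M N a (0 : TensorProduct 𝕜 M N) = 0 := map_zero _
  rw [h0] at hW
  obtain ⟨W', hW', hsub⟩ := Filter.mem_comap.1 hW
  have hbdd : VNBdd 𝕜 (inferInstance : TopologicalSpace (M × N))
      ((fun p : M × N => (a • p.1, p.2)) '' s) := by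
    refine VNBdd.mono_set (vnbdd_prod
      (hσM _ (vnbdd_prod (vnbdd_singleton hA.1 a) (vnbdd_fst hs))) (vnbdd_snd hs)) ?_
    rintro _ ⟨p, hp, rfl⟩
    exact ⟨⟨(a, p.1), ⟨rfl, ⟨p, hp, rfl⟩⟩, rfl⟩, ⟨p, hp, rfl⟩⟩
  have habs : Absorbs 𝕜 W'
      {y | ∃ b ∈ ({a} : Set A), ∃ x ∈ (fun p : M × N => p.1 ⊗ₜ[𝕜] p.2) '' s,
        TaL 𝕜 M N b x = y} := by
    refine ((hT.2.1 _ hbdd) W' hW').mono_right ?_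
    rintro _ ⟨b, rfl, _, ⟨p, hp, rfl⟩, rfl⟩
    exact ⟨(b • p.1, p.2), ⟨p, hp, rfl⟩, (TaL_tmul b p.1 p.2).symm⟩
  have := absorbs_omega (g := fun b : A => TaL 𝕜 M N b) habs
  refine this.mono_left ?_
  intro t ht
  exact hsub (by simpa using ht a rfl)

/-- Pointwise absorbing property for the β case. -/
theorem beta_pointwise_absorbs (hA : IsLCTop 𝕜 A inferInstance)
    (hM : IsLCTop 𝕜 M inferInstance) (hN : IsLCTop 𝕜 N inferInstance)
    {τT : TopologicalSpace (TensorProduct 𝕜 M N)}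
    (hT : IsBetaTensorTop 𝕜 inferInstance inferInstance τT)
    (hσM : BddMap 𝕜 (inferInstance : TopologicalSpace (A × M)) inferInstance
      (fun p : A × M => p.1 • p.2))
    {S : Set A} (hS : VNBdd 𝕜 inferInstance S)
    {W' : Set (TensorProduct 𝕜 M N)} (hW' : W' ∈ @nhds _ τT 0)
    (hbal : Balanced 𝕜 W') (hconv : RCConvex 𝕜 W')
    (x : TensorProduct 𝕜 M N) :
    Absorbs 𝕜 W' ((fun a => TaL 𝕜 M N a x) '' S) := by
  induction x using TensorProduct.induction_on with
  | zero =>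
    have h0 : (0 : TensorProduct 𝕜 M N) ∈ W' := by
      letI := τT
      exact mem_of_mem_nhds hW'
    have habs0 : Absorbs 𝕜 W' ({0} : Set (TensorProduct 𝕜 M N)) := by
      rw [singleton_zero]; exact Absorbs.zero h0
    refine habs0.mono_right ?_
    rintro _ ⟨a, ha, rfl⟩
    simp
  | tmul m n =>
    have hbdd : VNBdd 𝕜 (inferInstance : TopologicalSpace (M × N))
        ((fun a : A => (a • m, n)) '' S) := by
      refine VNBdd.mono_set (vnbdd_prod
        (hσM _ (vnbdd_prod hS (vnbdd_singleton hM.1 m))) (vnbdd_singleton hN.1 n)) ?_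
      rintro _ ⟨a, ha, rfl⟩
      exact ⟨⟨(a, m), ⟨ha, rfl⟩, rfl⟩, rfl⟩
    refine ((hT.2.1 _ hbdd) W' hW').mono_right ?_
    rintro _ ⟨a, ha, rfl⟩
    exact ⟨(a • m, n), ⟨a, ha, rfl⟩, (TaL_tmul a m n).symm⟩
  | add x y hx hy =>
    have hsub : ((fun a => TaL 𝕜 M N a (x + y)) '' S)
        ⊆ ((fun a => TaL 𝕜 M N a x) '' S) + ((fun a => TaL 𝕜 M N a y) '' S) := by
      rintro _ ⟨a, ha, rfl⟩
      exact ⟨TaL 𝕜 M N a x, ⟨a, ha, rfl⟩, TaL 𝕜 M N a y, ⟨a, ha, rfl⟩, (map_add _ _ _).symm⟩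
    exact absorbs_of_absorbs_smul two_ne_zero
      (((hx.add hy).mono_left (hconv.add_subset_two_smul hbal)).mono_right hsub)

end BigLemmas
section Assembly
open Filter Topology
set_option linter.unusedSectionVars false
set_option maxHeartbeats 1000000

variable {𝕜 : Type*} [RCLike 𝕜]
  {A : Type*} [CommRing A] [Algebra 𝕜 A] [TopologicalSpace A]
  {M : Type*} [AddCommGroup M] [Module 𝕜 M] [Module A M] [IsScalarTower 𝕜 A M]
    [TopologicalSpace M]
  {N : Type*} [AddCommGroup N] [Module 𝕜 N] [Module A N] [IsScalarTower 𝕜 A N]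
    [TopologicalSpace N]

theorem TaL_sub (a b : A) (x : TensorProduct 𝕜 M N) :
    TaL 𝕜 M N (a - b) x = TaL 𝕜 M N a x - TaL 𝕜 M N b x := by
  have h := TaL_add (a - b) b x
  rw [sub_add_cancel] at h
  rw [h]; abel

/-- `J` (the closure of the balanced relations) is invariant under `TaL a`. -/
theorem TaL_mem_J {τT : TopologicalSpace (TensorProduct 𝕜 M N)}
    (hTa : ∀ a : A, @Continuous _ _ τT τT (TaL 𝕜 M N a))
    {J : Submodule 𝕜 (TensorProduct 𝕜 M N)}
    (hJset : (J : Set (TensorProduct 𝕜 M N)) = @closure _ τT (balancedRelComm 𝕜 A M N))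
    (a : A) : ∀ x ∈ J, TaL 𝕜 M N a x ∈ J := by
  letI := τT
  intro x hx
  have hx' : x ∈ @closure _ τT (balancedRelComm 𝕜 A M N) := by rw [← hJset]; exact hx
  have hmap : TaL 𝕜 M N a '' (balancedRelComm 𝕜 A M N : Set (TensorProduct 𝕜 M N))
      ⊆ (balancedRelComm 𝕜 A M N : Set (TensorProduct 𝕜 M N)) := by
    have hle : Submodule.map (TaL 𝕜 M N a) (balancedRelComm 𝕜 A M N)
        ≤ balancedRelComm 𝕜 A M N := by
      rw [balancedRelComm, Submodule.map_span]
      refine Submodule.span_le.2 ?_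
      rintro _ ⟨_, ⟨b, m, n, rfl⟩, rfl⟩
      refine Submodule.subset_span ⟨b, a • m, n, ?_⟩
      rw [map_sub, TaL_tmul, TaL_tmul, smul_smul, mul_comm, mul_smul]
    rintro _ ⟨z, hz, rfl⟩
    exact hle (Submodule.mem_map.2 ⟨z, hz, rfl⟩)
  have hsub := (image_closure_subset_closure_image (hTa a)).trans (closure_mono hmap)
  have hmem : TaL 𝕜 M N a x ∈ @closure _ τT (balancedRelComm 𝕜 A M N) :=
    hsub ⟨x, hx', rfl⟩
  rw [← hJset] at hmem
  exact hmem

/-- Construction of the A-scalar action on the quotient. -/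
theorem exists_smulQ {J : Submodule 𝕜 (TensorProduct 𝕜 M N)}
    (hJ : ∀ a : A, ∀ x ∈ J, TaL 𝕜 M N a x ∈ J) :
    ∃ smul : A → (TensorProduct 𝕜 M N ⧸ J) →ₗ[𝕜] (TensorProduct 𝕜 M N ⧸ J),
      (∀ (a : A) (x : TensorProduct 𝕜 M N), smul a (J.mkQ x) = J.mkQ (TaL 𝕜 M N a x)) ∧
      (∀ (a : A) (m : M) (n : N),
        smul a (J.mkQ (m ⊗ₜ[𝕜] n)) = J.mkQ ((a • m) ⊗ₜ[𝕜] n)) ∧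
      (∀ (a b : A) (x : TensorProduct 𝕜 M N ⧸ J), smul a (smul b x) = smul (a * b) x) ∧
      (∀ x, smul 1 x = x) ∧
      (∀ (a b : A) (x : TensorProduct 𝕜 M N ⧸ J),
        smul (a + b) x = smul a x + smul b x) := by
  have hker : ∀ a : A, J ≤ LinearMap.ker (J.mkQ ∘ₗ TaL 𝕜 M N a) := by
    intro a x hx
    rw [LinearMap.mem_ker, LinearMap.comp_apply, Submodule.mkQ_apply,
      Submodule.Quotient.mk_eq_zero]
    exact hJ a x hx
  have hchar : ∀ (a : A) (x : TensorProduct 𝕜 M N),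
      (J.liftQ (J.mkQ ∘ₗ TaL 𝕜 M N a) (hker a)) (J.mkQ x) = J.mkQ (TaL 𝕜 M N a x) := by
    intro a x
    rw [Submodule.mkQ_apply, Submodule.liftQ_apply, LinearMap.comp_apply, Submodule.mkQ_apply]
  refine ⟨fun a => J.liftQ (J.mkQ ∘ₗ TaL 𝕜 M N a) (hker a), hchar, ?_, ?_, ?_, ?_⟩
  · intro a m n
    rw [hchar, TaL_tmul]
  · intro a b x
    obtain ⟨y, rfl⟩ := Submodule.mkQ_surjective J x
    rw [hchar, hchar, hchar, TaL_comp]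
  · intro x
    obtain ⟨y, rfl⟩ := Submodule.mkQ_surjective J x
    rw [hchar, TaL_one]
  · intro a b x
    obtain ⟨y, rfl⟩ := Submodule.mkQ_surjective J x
    rw [hchar, hchar, hchar, TaL_add, map_add]

/-- Joint continuity of the action on the tensor product, for the projective topology. -/
theorem sigma_cont_pi (hA : IsLCTop 𝕜 A inferInstance) (hM : IsLCTop 𝕜 M inferInstance)
    (hN : IsLCTop 𝕜 N inferInstance)
    {τT : TopologicalSpace (TensorProduct 𝕜 M N)}
    (hT : IsProjTensorTop 𝕜 inferInstance inferInstance τT)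
    (hσM : Continuous fun p : A × M => p.1 • p.2) :
    @Continuous (A × TensorProduct 𝕜 M N) _ (@instTopologicalSpaceProd A _ _ τT) τT
      (fun p => TaL 𝕜 M N p.1 p.2) := by
  letI := τT
  haveI : IsTopologicalAddGroup (TensorProduct 𝕜 M N) := hT.1.1.1
  haveI : ContinuousSMul 𝕜 (TensorProduct 𝕜 M N) := hT.1.1.2
  haveI : IsTopologicalAddGroup A := hA.1.1
  have hTa : ∀ a : A, Continuous (TaL 𝕜 M N a) := cont_TaL_pi hT hσM
  rw [continuous_iff_continuousAt]
  rintro ⟨a₀, x₀⟩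
  have hφ : Continuous fun a : A => TaL 𝕜 M N a x₀ := by
    induction x₀ using TensorProduct.induction_on with
    | zero => simp only [map_zero]; exact continuous_const
    | tmul m n =>
      have heq : (fun a : A => TaL 𝕜 M N a (m ⊗ₜ[𝕜] n))
          = (fun p : M × N => p.1 ⊗ₜ[𝕜] p.2) ∘ (fun a : A => (a • m, n)) :=
        funext fun a => TaL_tmul a m n
      rw [heq]
      exact hT.2.1.comp
        ((hσM.comp (continuous_id.prodMk continuous_const)).prodMk continuous_const)
    | add x y hx hy =>
      simp only [map_add]
      exact hx.add hy
  have hdecomp : (fun p : A × TensorProduct 𝕜 M N =>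
        TaL 𝕜 M N p.1 p.2 - TaL 𝕜 M N a₀ x₀)
      = (fun p : A × TensorProduct 𝕜 M N =>
        TaL 𝕜 M N (p.1 - a₀) (p.2 - x₀) + TaL 𝕜 M N a₀ (p.2 - x₀)
          + (TaL 𝕜 M N p.1 x₀ - TaL 𝕜 M N a₀ x₀)) := by
    funext p
    simp only [TaL_sub, map_sub]
    abel
  have t1 : Tendsto (fun p : A × TensorProduct 𝕜 M N => TaL 𝕜 M N (p.1 - a₀) (p.2 - x₀))
      (𝓝 (a₀, x₀)) (𝓝 0) := by
    rw [tendsto_def]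
    intro W hW
    obtain ⟨B, hBnhds, hBW, hbal, hconv⟩ := exists_balanced_convex_nhds hT.1 hW
    have h00 : Tendsto (fun p : M × N => p.1 ⊗ₜ[𝕜] p.2) (𝓝 (0, 0)) (𝓝 0) :=
      hT.2.1.tendsto' (0, 0) 0 (by simp)
    have hpre := h00 hBnhds
    rw [mem_map, mem_nhds_prod_iff] at hpre
    obtain ⟨U, hU, V, hV, hUV⟩ := hpre
    have hUVB : tset 𝕜 U V ⊆ B := by
      rintro _ ⟨m, hm, n, hn, rfl⟩
      exact hUV (show (m, n) ∈ U ×ˢ V from ⟨hm, hn⟩)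
    have hs00 : Tendsto (fun p : A × M => p.1 • p.2) (𝓝 (0, 0)) (𝓝 0) :=
      hσM.tendsto' (0, 0) 0 (by simp)
    have hpre2 := hs00 hU
    rw [mem_map, mem_nhds_prod_iff] at hpre2
    obtain ⟨UA, hUA, U₂, hU₂, hAU⟩ := hpre2
    have hΓmem := cbHull_tset_mem_piFam hM hN hU₂ hV
    have hle : τT ≤ (piFam_good hM hN).topology :=
      hT.2.2 _ (piFam_good hM hN).isLC (piFam_tmul_cont hM hN)
    have hΓnhds : cbHull 𝕜 (tset 𝕜 U₂ V) ∈ 𝓝 (0 : TensorProduct 𝕜 M N) :=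
      nhds_mono hle (GoodFamily.mem_nhds _ hΓmem)
    have hkey : ∀ a ∈ UA, ∀ y ∈ cbHull 𝕜 (tset 𝕜 U₂ V), TaL 𝕜 M N a y ∈ B := by
      intro a ha y hy
      have h2 : TaL 𝕜 M N a '' tset 𝕜 U₂ V ⊆ tset 𝕜 U V := by
        rintro _ ⟨_, ⟨m, hm, n, hn, rfl⟩, rfl⟩
        exact ⟨a • m, hAU (show (a, m) ∈ UA ×ˢ U₂ from ⟨ha, hm⟩), n, hn, TaL_tmul a m n⟩
      exact cbHull_min hUVB hbal hconv
        (cbHull_mono h2 (image_cbHull_subset (TaL 𝕜 M N a) ⟨y, hy, rfl⟩))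
    have ev1 : ∀ᶠ p : A × TensorProduct 𝕜 M N in 𝓝 (a₀, x₀), p.1 - a₀ ∈ UA :=
      ((continuous_fst.sub continuous_const).tendsto' (a₀, x₀) 0 (by simp)).eventually_mem hUA
    have ev2 : ∀ᶠ p : A × TensorProduct 𝕜 M N in 𝓝 (a₀, x₀),
        p.2 - x₀ ∈ cbHull 𝕜 (tset 𝕜 U₂ V) :=
      ((continuous_snd.sub continuous_const).tendsto' (a₀, x₀) 0 (by simp)).eventually_mem
        hΓnhds
    filter_upwards [ev1, ev2] with p h1 h2
    exact hBW (hkey _ h1 _ h2)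
  have t2 : Tendsto (fun p : A × TensorProduct 𝕜 M N => TaL 𝕜 M N a₀ (p.2 - x₀))
      (𝓝 (a₀, x₀)) (𝓝 0) := by
    have hsnd : Tendsto (fun p : A × TensorProduct 𝕜 M N => p.2 - x₀)
        (𝓝 (a₀, x₀)) (𝓝 0) :=
      (continuous_snd.sub continuous_const).tendsto' (a₀, x₀) 0 (by simp)
    have := ((hTa a₀).tendsto' 0 0 (map_zero _)).comp hsnd
    exact this
  have t3 : Tendsto (fun p : A × TensorProduct 𝕜 M N =>
      TaL 𝕜 M N p.1 x₀ - TaL 𝕜 M N a₀ x₀) (𝓝 (a₀, x₀)) (𝓝 0) :=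
    ((hφ.comp continuous_fst).sub continuous_const).tendsto' (a₀, x₀) 0 (by simp)
  have hsum := (t1.add t2).add t3
  rw [show (0:TensorProduct 𝕜 M N) + 0 + 0 = 0 by simp] at hsum
  rw [← hdecomp] at hsum
  have hfin := hsum.add_const (TaL 𝕜 M N a₀ x₀)
  simp only [sub_add_cancel, zero_add] at hfin
  exact hfin

end Assembly
theorem statement10 {𝕜 : Type*} [RCLike 𝕜]
    (A : Type*) [CommRing A] [Algebra 𝕜 A] [TopologicalSpace A] [T2Space A]
    (hA : IsLCTop 𝕜 A (inferInstance))
    (M : Type*) [AddCommGroup M] [Module 𝕜 M] [Module A M] [IsScalarTower 𝕜 A M]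
    [TopologicalSpace M] [T2Space M] (hM : IsLCTop 𝕜 M (inferInstance))
    (N : Type*) [AddCommGroup N] [Module 𝕜 N] [Module A N] [IsScalarTower 𝕜 A N]
    [TopologicalSpace N] [T2Space N] (hN : IsLCTop 𝕜 N (inferInstance)) :
    -- bounded case: M ⊗_A^β N is a bounded A-module
    (∀ (_ : BddMap 𝕜 (inferInstance : TopologicalSpace (A × A)) (inferInstance)
        (fun p : A × A => p.1 * p.2))
       (_ : BddMap 𝕜 (inferInstance : TopologicalSpace (A × M)) (inferInstance)
        (fun p : A × M => p.1 • p.2))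
       (_ : BddMap 𝕜 (inferInstance : TopologicalSpace (A × N)) (inferInstance)
        (fun p : A × N => p.1 • p.2))
       (τT : TopologicalSpace (TensorProduct 𝕜 M N))
       (_ : IsBetaTensorTop 𝕜 (inferInstance) (inferInstance) τT)
       (J : Submodule 𝕜 (TensorProduct 𝕜 M N))
       (_ : (J : Set (TensorProduct 𝕜 M N)) = @closure _ τT (balancedRelComm 𝕜 A M N))
       (τQ : TopologicalSpace (TensorProduct 𝕜 M N ⧸ J)), τQ = τT.coinduced J.mkQ →
      ∃ smul : A → (TensorProduct 𝕜 M N ⧸ J) →ₗ[𝕜] (TensorProduct 𝕜 M N ⧸ J),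
        (∀ (a : A) (m : M) (n : N),
          smul a (J.mkQ (m ⊗ₜ[𝕜] n)) = J.mkQ ((a • m) ⊗ₜ[𝕜] n)) ∧
        (∀ (a b : A) (x : TensorProduct 𝕜 M N ⧸ J), smul a (smul b x) = smul (a * b) x) ∧
        (∀ x, smul 1 x = x) ∧
        (∀ (a b : A) (x : TensorProduct 𝕜 M N ⧸ J), smul (a + b) x = smul a x + smul b x) ∧
        BddMap 𝕜 (@instTopologicalSpaceProd A (TensorProduct 𝕜 M N ⧸ J) (inferInstance) τQ)
          τQ (fun p : A × (TensorProduct 𝕜 M N ⧸ J) => smul p.1 p.2)) ∧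
    -- locally convex case: M ⊗_A^π N is a locally convex A-module
    (∀ (_ : Continuous fun p : A × A => p.1 * p.2)
       (_ : Continuous fun p : A × M => p.1 • p.2)
       (_ : Continuous fun p : A × N => p.1 • p.2)
       (τT : TopologicalSpace (TensorProduct 𝕜 M N))
       (_ : IsProjTensorTop 𝕜 (inferInstance) (inferInstance) τT)
       (J : Submodule 𝕜 (TensorProduct 𝕜 M N))
       (_ : (J : Set (TensorProduct 𝕜 M N)) = @closure _ τT (balancedRelComm 𝕜 A M N))
       (τQ : TopologicalSpace (TensorProduct 𝕜 M N ⧸ J)), τQ = τT.coinduced J.mkQ →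
      ∃ smul : A → (TensorProduct 𝕜 M N ⧸ J) →ₗ[𝕜] (TensorProduct 𝕜 M N ⧸ J),
        (∀ (a : A) (m : M) (n : N),
          smul a (J.mkQ (m ⊗ₜ[𝕜] n)) = J.mkQ ((a • m) ⊗ₜ[𝕜] n)) ∧
        (∀ (a b : A) (x : TensorProduct 𝕜 M N ⧸ J), smul a (smul b x) = smul (a * b) x) ∧
        (∀ x, smul 1 x = x) ∧
        (∀ (a b : A) (x : TensorProduct 𝕜 M N ⧸ J), smul (a + b) x = smul a x + smul b x) ∧
        @Continuous (A × (TensorProduct 𝕜 M N ⧸ J)) (TensorProduct 𝕜 M N ⧸ J)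
          (@instTopologicalSpaceProd A (TensorProduct 𝕜 M N ⧸ J) (inferInstance) τQ) τQ
          (fun p : A × (TensorProduct 𝕜 M N ⧸ J) => smul p.1 p.2)) := by
  constructor
  · -- bounded (β) case
    intro hmulA hsM hsN τT hT J hJset τQ hτQ
    subst hτQ
    have hTgrp : @IsTopologicalAddGroup _ τT _ := hT.1.1.1
    have hTa : ∀ a : A, @Continuous _ _ τT τT (TaL 𝕜 M N a) := cont_TaL_beta hA hT hsM
    obtain ⟨smul, hchar, htmul, hmul2, hone, hadd⟩ := exists_smulQ (TaL_mem_J hTa hJset)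
    refine ⟨smul, htmul, hmul2, hone, hadd, ?_⟩
    intro s hs
    have hSA : VNBdd 𝕜 (inferInstance : TopologicalSpace A) (Prod.fst '' s) := vnbdd_fst hs
    have hSQ : VNBdd 𝕜 (τT.coinduced J.mkQ) (Prod.snd '' s) := vnbdd_snd hs
    intro WQ hWQ
    have hpre : J.mkQ ⁻¹' WQ ∈ @nhds _ τT 0 := mkQ_preimage_nhds J τT hWQ
    obtain ⟨W', hW'nhds, hW'sub, hW'bal, hW'conv⟩ := exists_balanced_convex_nhds hT.1 hpre
    set SA := Prod.fst '' s with hSAdef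
    set Ω := {x : TensorProduct 𝕜 M N | ∀ a ∈ SA, TaL 𝕜 M N a x ∈ W'} with hΩdef
    have hΩbal : Balanced 𝕜 Ω := by
      intro e he
      rintro _ ⟨x, hx, rfl⟩ a ha
      have hsm : TaL 𝕜 M N a (e • x) = e • TaL 𝕜 M N a x := map_smul _ _ _
      rw [mem_setOf_eq] at hx
      exact hsm ▸ hW'bal e he ⟨_, hx a ha, rfl⟩
    have hΩconv : RCConvex 𝕜 Ω := by
      intro x hx y hy t h0 h1
      intro a ha
      rw [mem_setOf_eq] at hx hy
      have : TaL 𝕜 M N a ((t:𝕜) • x + ((1 - t : ℝ):𝕜) • y)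
          = (t:𝕜) • TaL 𝕜 M N a x + ((1 - t : ℝ):𝕜) • TaL 𝕜 M N a y := by
        rw [map_add, map_smul, map_smul]
      rw [this]
      exact hW'conv (hx a ha) (hy a ha) t h0 h1
    have hΩabs : Absorbent 𝕜 Ω := by
      intro x
      have hpt := beta_pointwise_absorbs hA hM hN hT hsM hSA hW'nhds hW'bal hW'conv x
      refine absorbs_omega (g := fun a : A => TaL 𝕜 M N a) (hpt.mono_right ?_)
      rintro _ ⟨a, ha, x', hx', rfl⟩
      rw [mem_singleton_iff] at hx'
      subst hx'
      exact ⟨a, ha, rfl⟩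
    have hΩbddabs : ∀ sb : Set (M × N), VNBdd 𝕜 inferInstance sb →
        Absorbs 𝕜 Ω ((fun p : M × N => p.1 ⊗ₜ[𝕜] p.2) '' sb) := by
      intro sb hsb
      refine absorbs_omega (g := fun a : A => TaL 𝕜 M N a) ?_
      have hbdd : VNBdd 𝕜 (inferInstance : TopologicalSpace (M × N))
          ((fun q : A × (M × N) => (q.1 • q.2.1, q.2.2)) '' (SA ×ˢ sb)) := by
        refine VNBdd.mono_set
          (vnbdd_prod (hsM _ (vnbdd_prod hSA (vnbdd_fst hsb))) (vnbdd_snd hsb)) ?_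
        rintro _ ⟨⟨a, p⟩, ⟨ha, hp⟩, rfl⟩
        exact ⟨⟨(a, p.1), ⟨ha, ⟨p, hp, rfl⟩⟩, rfl⟩, ⟨p, hp, rfl⟩⟩
      refine ((hT.2.1 _ hbdd) W' hW'nhds).mono_right ?_
      rintro _ ⟨a, ha, _, ⟨p, hp, rfl⟩, rfl⟩
      exact ⟨(a • p.1, p.2), ⟨(a, p), ⟨ha, hp⟩, rfl⟩, (TaL_tmul a p.1 p.2).symm⟩
    have hΩmem : Ω ∈ betaFam 𝕜 M N := ⟨hΩbal, hΩconv, hΩabs, hΩbddabs⟩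
    have hle : τT ≤ (betaFam_good (𝕜 := 𝕜) (M := M) (N := N)).topology :=
      hT.2.2 _ (betaFam_good).isLC betaFam_tmul_bdd
    have hΩnhds : Ω ∈ @nhds _ τT 0 := nhds_mono hle (GoodFamily.mem_nhds _ hΩmem)
    have hΩQ : J.mkQ '' Ω ∈ @nhds _ (τT.coinduced J.mkQ) 0 :=
      mkQ_image_nhds J τT hTgrp hΩnhds
    obtain ⟨r, hr⟩ := absorbs_iff_norm.1 (hSQ _ hΩQ)
    refine absorbs_iff_norm.2 ⟨max r 1, fun e he => ?_⟩
    rintro _ ⟨⟨a, q⟩, hpq, rfl⟩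
    have haSA : a ∈ SA := ⟨(a, q), hpq, rfl⟩
    have hq : q ∈ e • (J.mkQ '' Ω) :=
      hr e (le_trans (le_max_left _ _) he) ⟨(a, q), hpq, rfl⟩
    obtain ⟨_, ⟨x, hxΩ, rfl⟩, hqe⟩ := hq
    rw [mem_setOf_eq] at hxΩ
    show smul a q ∈ e • WQ
    rw [← hqe]
    have hsm : smul a (e • J.mkQ x) = e • J.mkQ (TaL 𝕜 M N a x) := by
      rw [map_smul, hchar]
    rw [hsm]
    exact smul_mem_smul_set (hW'sub (hxΩ a haSA))
  · -- locally convex (π) case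
    intro hmulA hsM hsN τT hT J hJset τQ hτQ
    subst hτQ
    have hTgrp : @IsTopologicalAddGroup _ τT _ := hT.1.1.1
    have hTa : ∀ a : A, @Continuous _ _ τT τT (TaL 𝕜 M N a) := cont_TaL_pi hT hsM
    obtain ⟨smul, hchar, htmul, hmul2, hone, hadd⟩ := exists_smulQ (TaL_mem_J hTa hJset)
    refine ⟨smul, htmul, hmul2, hone, hadd, ?_⟩
    have hσ := sigma_cont_pi hA hM hN hT hsM
    have hmkQc : @Continuous _ _ τT (τT.coinduced J.mkQ) J.mkQ := continuous_coinduced_rng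
    have hmkQo := mkQ_isOpenMap J τT hTgrp
    letI := τT
    letI : TopologicalSpace (TensorProduct 𝕜 M N ⧸ J) := τT.coinduced J.mkQ
    have hqm : IsQuotientMap (Prod.map (id : A → A) J.mkQ) :=
      IsOpenMap.isQuotientMap (IsOpenMap.id.prodMap hmkQo)
        (continuous_id.prodMap hmkQc)
        (Function.Surjective.prodMap Function.surjective_id (Submodule.mkQ_surjective J))
    rw [hqm.continuous_iff]
    have heq : (fun p : A × (TensorProduct 𝕜 M N ⧸ J) => smul p.1 p.2)
        ∘ (Prod.map (id : A → A) J.mkQ)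
        = J.mkQ ∘ (fun p : A × TensorProduct 𝕜 M N => TaL 𝕜 M N p.1 p.2) :=
      funext fun p => hchar p.1 p.2
    rw [heq]
    exact hmkQc.comp hσ
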